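/- (Ping-pong lemma, first formulation) Let a group Γ act on a set X. Suppose a, b ∈ Γ and A⁺, A⁻, B⁺, B⁻ are pairwise disjoint nonempty subsets of X such that a.(A⁺ ∪ B⁻ ∪ B⁺) ⊆ A⁺, a⁻¹.(A⁻ ∪ B⁻ ∪ B⁺) ⊆ A⁻, b.(B⁺ ∪ A⁻ ∪ A⁺) ⊆ B⁺, and b⁻¹.(B⁻ ∪ A⁻ ∪ A⁺) ⊆ B⁻. Then the group homomorphism from the free group on two generators to Γ sending the two generators to a and b respectively is injective; in particular the subgroup ⟨a, b⟩ of Γ is free of rank 2. -/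

import Mathlib

open scoped Pointwise

open Monoid.CoprodI

private lemma pow_smul_subset_aux {Γ X : Type*} [Group Γ] [MulAction Γ X] (c : Γ)
    (S T : Set X) (hTS : T ⊆ S) (h : c • S ⊆ T) :
    ∀ n : ℤ, 1 ≤ n → c ^ n • S ⊆ T := by
  intro n hn
  refine Int.le_induction (motive := fun n _ => c ^ n • S ⊆ T) ?_ ?_ n hn
  · rw [zpow_one]; exact h
  · intro n _ hi
    calc c ^ (n + 1) • S = c ^ n • c • S := by
          rw [zpow_add_one, mul_smul]
      _ ⊆ c ^ n • S := Set.smul_set_mono (h.trans hTS)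
      _ ⊆ T := hi

private lemma zpow_smul_aux {Γ X : Type*} [Group Γ] [MulAction Γ X] (c : Γ)
    (P M S : Set X)
    (hp : c • (P ∪ S) ⊆ P) (hm : c⁻¹ • (M ∪ S) ⊆ M) :
    ∀ n : ℤ, n ≠ 0 → c ^ n • S ⊆ P ∪ M := by
  intro n hn
  rcases lt_or_gt_of_ne hn with hlt | hgt
  · have h1n : 1 ≤ -n := by omega
    have key : c⁻¹ ^ (-n) • (M ∪ S) ⊆ M :=
      pow_smul_subset_aux c⁻¹ (M ∪ S) M Set.subset_union_left hm (-n) h1n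
    have hrw : c ^ n = c⁻¹ ^ (-n) := by rw [inv_zpow', neg_neg]
    calc c ^ n • S ⊆ c ^ n • (M ∪ S) := Set.smul_set_mono Set.subset_union_right
      _ ⊆ M := by rw [hrw]; exact key
      _ ⊆ P ∪ M := Set.subset_union_right
  · have h1n : 1 ≤ n := hgt
    have key : c ^ n • (P ∪ S) ⊆ P :=
      pow_smul_subset_aux c (P ∪ S) P Set.subset_union_left hp n h1n
    calc c ^ n • S ⊆ c ^ n • (P ∪ S) := Set.smul_set_mono Set.subset_union_right
      _ ⊆ P := key
      _ ⊆ P ∪ M := Set.subset_union_left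

/-- The ping-pong lemma (first formulation): if `a, b ∈ Γ` and there are pairwise disjoint
nonempty subsets `A⁺, A⁻, B⁺, B⁻` of a `Γ`-set `X` satisfying the ping-pong conditions,
then the homomorphism from the free group on two generators sending the generators to
`a` and `b` is injective, i.e. `⟨a, b⟩` is free of rank `2`. -/
theorem ping_pong {Γ X : Type*} [Group Γ] [MulAction Γ X] (a b : Γ)
    (Ap Am Bp Bm : Set X)
    (hAp : Ap.Nonempty) (hAm : Am.Nonempty) (hBp : Bp.Nonempty) (hBm : Bm.Nonempty)
    (h1 : Disjoint Ap Am) (h2 : Disjoint Ap Bp) (h3 : Disjoint Ap Bm)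
    (h4 : Disjoint Am Bp) (h5 : Disjoint Am Bm) (h6 : Disjoint Bp Bm)
    (ha : a • (Ap ∪ Bm ∪ Bp) ⊆ Ap)
    (ha' : a⁻¹ • (Am ∪ Bm ∪ Bp) ⊆ Am)
    (hb : b • (Bp ∪ Am ∪ Ap) ⊆ Bp)
    (hb' : b⁻¹ • (Bm ∪ Am ∪ Ap) ⊆ Bm) :
    Function.Injective ⇑(FreeGroup.lift ![a, b]) := by
  -- key power estimates
  have hA : ∀ n : ℤ, n ≠ 0 → a ^ n • (Bp ∪ Bm) ⊆ Ap ∪ Am := by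
    refine zpow_smul_aux a Ap Am (Bp ∪ Bm) ?_ ?_
    · refine (Set.smul_set_mono ?_).trans ha
      intro x hx
      rcases hx with hx | hx | hx
      · exact Or.inl (Or.inl hx)
      · exact Or.inr hx
      · exact Or.inl (Or.inr hx)
    · refine (Set.smul_set_mono ?_).trans ha'
      intro x hx
      rcases hx with hx | hx | hx
      · exact Or.inl (Or.inl hx)
      · exact Or.inr hx
      · exact Or.inl (Or.inr hx)
  have hB : ∀ n : ℤ, n ≠ 0 → b ^ n • (Ap ∪ Am) ⊆ Bp ∪ Bm := by
    refine zpow_smul_aux b Bp Bm (Ap ∪ Am) ?_ ?_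
    · refine (Set.smul_set_mono ?_).trans hb
      intro x hx
      rcases hx with hx | hx | hx
      · exact Or.inl (Or.inl hx)
      · exact Or.inr hx
      · exact Or.inl (Or.inr hx)
    · refine (Set.smul_set_mono ?_).trans hb'
      intro x hx
      rcases hx with hx | hx | hx
      · exact Or.inl (Or.inl hx)
      · exact Or.inr hx
      · exact Or.inl (Or.inr hx)
  -- express the free group lift via the free product lift
  have heq : FreeGroup.lift ![a, b] =
      (Monoid.CoprodI.lift fun i : Fin 2 => FreeGroup.lift fun _ : Unit => ![a, b] i).comp
        (@freeGroupEquivCoprodI (Fin 2)).toMonoidHom := by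
    ext i
    simp
  rw [heq, MonoidHom.coe_comp]
  refine Function.Injective.comp ?_ (MulEquiv.injective freeGroupEquivCoprodI)
  show Function.Injective
    (Monoid.CoprodI.lift fun i : Fin 2 => FreeGroup.lift fun _ : Unit => ![a, b] i)
  let H : Fin 2 → Type _ := fun _ => FreeGroup Unit
  let f : ∀ i : Fin 2, H i →* Γ := fun i => FreeGroup.lift fun _ => ![a, b] i
  let X' : Fin 2 → Set X := ![Ap ∪ Am, Bp ∪ Bm]
  refine Monoid.CoprodI.lift_injective_of_ping_pong f ?_ X' ?_ ?_ ?_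
  · exact Or.inr ⟨0, le_trans (Cardinal.nat_lt_aleph0 3).le (Cardinal.aleph0_le_mk (FreeGroup Unit))⟩
  · intro i
    fin_cases i
    · exact Set.Nonempty.inl hAp
    · exact Set.Nonempty.inl hBp
  · intro i j hij
    fin_cases i <;> fin_cases j
    · exact absurd rfl hij
    · show Disjoint (Ap ∪ Am) (Bp ∪ Bm)
      exact Set.disjoint_union_left.mpr
        ⟨Set.disjoint_union_right.mpr ⟨h2, h3⟩, Set.disjoint_union_right.mpr ⟨h4, h5⟩⟩
    · show Disjoint (Bp ∪ Bm) (Ap ∪ Am)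
      exact (Set.disjoint_union_left.mpr
        ⟨Set.disjoint_union_right.mpr ⟨h2, h3⟩, Set.disjoint_union_right.mpr ⟨h4, h5⟩⟩).symm
    · exact absurd rfl hij
  · intro i j hij
    refine FreeGroup.freeGroupUnitEquivInt.forall_congr_left.mpr ?_
    intro n hne1
    have hnne0 : n ≠ 0 := by
      rintro rfl
      apply hne1
      simp [FreeGroup.freeGroupUnitEquivInt]
    change FreeGroup.lift (fun _ : Unit => ![a, b] i) (FreeGroup.of () ^ n) • X' j ⊆ X' i
    simp only [map_zpow, FreeGroup.lift_apply_of]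
    fin_cases i <;> fin_cases j
    · exact absurd rfl hij
    · show (![a, b] 0) ^ n • X' 1 ⊆ X' 0
      simpa [X'] using hA n hnne0
    · show (![a, b] 1) ^ n • X' 0 ⊆ X' 1
      simpa [X'] using hB n hnne0
    · exact absurd rfl hij
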